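/- Let ⟨σ_k : k ∈ ℕ⟩ be the standard length-lexicographic enumeration of 2^{<ω}, let π : ℕ → ℕ be a permutation, and let L ⊆ ℕ be such that for every σ ∈ 2^{<ω} the set [σ] ∩ {σ_k : k ∈ π[L]} is nonempty, where [σ] = {τ ∈ 2^{<ω} : σ ⊆ τ}. Define a_∅ = ∅ and, for each σ ∈ 2^{<ω}, a_{σ⌢0} = {k ∈ π[L] : σ⌢1 ⊆ σ_k} and a_{σ⌢1} = ℕ ∖ a_{σ⌢0}. Then ⟨a_σ : σ ∈ 2^{<ω}⟩ is a T-algebra on 2^{<ω}: for every x ∈ 2^{≤ω}, the sequence ⟨a_{x↾(n+1)} : n+1 ≤ dom(x)⟩ is a proper coherent sequence. -/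

import Mathlib

open Set

noncomputable section

/-- The least uncountable ordinal `ω₁`. -/
def omega1 : Ordinal := (Cardinal.aleph 1).ord

/-- `⋃_{γ ∈ F} a_γ` for a finite set `F` of indices. -/
def unionFin (a : Ordinal → Set ℕ) (F : Finset Ordinal) : Set ℕ :=
  ⋃ γ ∈ F, a γ

/-- A sequence of subsets of `ℕ`, with indices from a (downward closed) domain `D`
of ordinals, is coherent if for all `α ≤ β` in the domain there is a finite `F ⊆ α`
with `a α ∩ a β ⊆ ⋃_{γ∈F} a γ` or `a α ⊆ a β ∪ ⋃_{γ∈F} a γ`. -/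
def CoherentOn (D : Set Ordinal) (a : Ordinal → Set ℕ) : Prop :=
  ∀ α β : Ordinal, α ≤ β → β ∈ D →
    ∃ F : Finset Ordinal, (∀ γ ∈ F, γ < α) ∧
      (a α ∩ a β ⊆ unionFin a F ∨ a α ⊆ a β ∪ unionFin a F)

/-- Properness: no `a β` is contained in a finite union of earlier terms. -/
def ProperOn (D : Set Ordinal) (a : Ordinal → Set ℕ) : Prop :=
  ∀ β ∈ D, ∀ F : Finset Ordinal, (∀ γ ∈ F, γ < β) → ¬ a β ⊆ unionFin a F

/-- `â_β = { α ≤ β : a α ∖ a β ⊆ ⋃_{γ∈F} a γ for some finite F ⊆ α }`. -/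
def hatA (a : Ordinal → Set ℕ) (β : Ordinal) : Set Ordinal :=
  { α | α ≤ β ∧ ∃ F : Finset Ordinal, (∀ γ ∈ F, γ < α) ∧ a α \ a β ⊆ unionFin a F }

/-- The topology `τ(A)` on `λ + 1 = {α : α ≤ λ}` generated by the subbase
consisting of the sets `â_β` and their complements, `β < λ`. -/
def tau (lam : Ordinal) (a : Ordinal → Set ℕ) :
    TopologicalSpace {α : Ordinal // α ≤ lam} :=
  TopologicalSpace.generateFrom
    { s | ∃ β < lam, s = {x : {α : Ordinal // α ≤ lam} | x.1 ∈ hatA a β} ∨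
                     s = {x : {α : Ordinal // α ≤ lam} | x.1 ∈ hatA a β}ᶜ }

/-- The subspace `ω₁ = {α : α < ω₁}` of `(ω₁+1, τ(A))`. -/
def tauSub (a : Ordinal → Set ℕ) : TopologicalSpace {y : Ordinal // y < omega1} :=
  TopologicalSpace.induced
    (fun y : {y : Ordinal // y < omega1} => (⟨y.1, y.2.le⟩ : {α : Ordinal // α ≤ omega1}))
    (tau omega1 a)

/-- Closed unbounded subsets of `ω₁`. -/
def IsClubW1 (C : Set Ordinal) : Prop :=
  C ⊆ Iio omega1 ∧
  (∀ α < omega1, ∃ β ∈ C, α ≤ β) ∧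
  (∀ δ, δ < omega1 → δ ≠ 0 → (∀ α < δ, ∃ β ∈ C, α < β ∧ β < δ) → δ ∈ C)

/-- Stationary subsets of `ω₁`: sets meeting every club. -/
def IsStationaryW1 (S : Set Ordinal) : Prop :=
  ∀ C : Set Ordinal, IsClubW1 C → (S ∩ C).Nonempty

/-- The stationary covering property for a coherent sequence whose index domain is `D`:
if the sequence has length `ω₁` (i.e. `Iio ω₁ ⊆ D`), then every stationary `S ⊆ ω₁`
together with some finite `F` covers, i.e. `⋃_{γ ∈ S ∪ F} â_γ = ω₁`.  (Sequences of
length `< ω₁` have the ScP by convention.) -/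
def HasScP (D : Set Ordinal) (a : Ordinal → Set ℕ) : Prop :=
  Iio omega1 ⊆ D →
    ∀ S : Set Ordinal, S ⊆ Iio omega1 → IsStationaryW1 S →
      ∃ F : Finset Ordinal, (⋃ γ ∈ S ∪ (↑F : Set Ordinal), hatA a γ) = Iio omega1

/-- A node of the tree `2^{≤ω₁}`: a function `val` defined on the ordinals `< len`
(with the canonical value `false` beyond `len`). -/
structure Node where
  len : Ordinal
  val : Ordinal → Bool
  canon : ∀ α, len ≤ α → val α = false

open Classical in
/-- The restriction `x ↾ β`. -/
def Node.restrict (x : Node) (β : Ordinal) : Node where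
  len := β
  val := fun α => if α < β then x.val α else false
  canon := fun α h => if_neg (not_lt.2 h)

/-- `τ.Extends σ` means `σ ⊆ τ`, i.e. `τ` extends `σ`. -/
def Node.Extends (τ σ : Node) : Prop :=
  σ.len ≤ τ.len ∧ ∀ α < σ.len, τ.val α = σ.val α

/-- Successor ordinals. -/
def IsSucc (o : Ordinal) : Prop := ∃ β, o = β + 1

open Classical in
/-- `σ†`: if `σ` has successor length `β+1`, the node agreeing with `σ` except at `β`;
otherwise `σ` itself. -/
def Node.dagger (σ : Node) : Node :=
  if h : IsSucc σ.len then
    { len := σ.len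
      val := fun α => if α = Classical.choose h then !(σ.val α) else σ.val α
      canon := by
        intro α hα
        have hs := Classical.choose_spec h
        have hne : α ≠ Classical.choose h := by
          intro he
          rw [hs, he] at hα
          rw [Ordinal.add_one_eq_succ] at hα
          exact absurd hα (not_le.2 (Order.lt_succ (Classical.choose h)))
        show (if α = Classical.choose h then !(σ.val α) else σ.val α) = false
        rw [if_neg hne]
        exact σ.canon α hα }
  else σ

open Classical in
/-- `σ ⌢ b` : the node `σ` extended by one value `b`. -/
def Node.snoc (σ : Node) (b : Bool) : Node where
  len := σ.len + 1
  val := fun α => if α = σ.len then b else σ.val α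
  canon := by
    intro α hα
    have h1 : σ.len < α := by
      have h2 : σ.len < σ.len + 1 := by
        rw [Ordinal.add_one_eq_succ]; exact Order.lt_succ σ.len
      exact lt_of_lt_of_le h2 hα
    show (if α = σ.len then b else σ.val α) = false
    rw [if_neg h1.ne']
    exact σ.canon α h1.le

open Classical in
/-- `x ⌢ σ` : concatenation of nodes. -/
def Node.append (x σ : Node) : Node where
  len := x.len + σ.len
  val := fun α => if α < x.len then x.val α else σ.val (α - x.len)
  canon := by
    intro α hα
    have h1 : ¬ α < x.len := not_lt.2 (le_trans (le_self_add : x.len ≤ x.len + σ.len) hα)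
    show (if α < x.len then x.val α else σ.val (α - x.len)) = false
    rw [if_neg h1]
    apply σ.canon
    by_contra h2
    rw [not_le] at h2
    have h3 : α ≤ x.len + (α - x.len) := Ordinal.le_add_sub α x.len
    have h4 : x.len + (α - x.len) < x.len + σ.len := (add_lt_add_iff_left x.len).2 h2
    exact absurd hα (not_le.2 (lt_of_le_of_lt h3 h4))

/-- A subtree of `2^{<ω₁}` that is downward closed, twinned and has no maximal elements. -/
structure GoodTree (Γ : Set Node) : Prop where
  lt_omega1 : ∀ σ ∈ Γ, σ.len < omega1
  downward : ∀ σ ∈ Γ, ∀ β ≤ σ.len, σ.restrict β ∈ Γ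
  twinned : ∀ σ ∈ Γ, σ.dagger ∈ Γ
  noMax : ∀ σ ∈ Γ, ∃ τ ∈ Γ, σ.len < τ.len ∧ τ.Extends σ

/-- `X(Γ)`: the maximal branches of `Γ`, i.e. the minimal elements of `2^{≤ω₁} ∖ Γ`. -/
def XGamma (Γ : Set Node) : Set Node :=
  { x | x.len ≤ omega1 ∧ x ∉ Γ ∧ ∀ β < x.len, x.restrict β ∈ Γ }

/-- The index domain of the branch sequence `A_{Γ,x}`. -/
def branchDomain (Γ : Set Node) (x : Node) : Set Ordinal :=
  { α | α + 1 ≤ x.len ∧ x.restrict (α + 1) ∈ Γ }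

/-- The branch sequence `A_{Γ,x}`, `a^x_α = a_{x ↾ (α+1)}`. -/
def branchSeq (a : Node → Set ℕ) (x : Node) : Ordinal → Set ℕ :=
  fun α => a (x.restrict (α + 1))

/-- A `𝕋`-algebra on the tree `Γ`. -/
structure IsTAlgebra (Γ : Set Node) (a : Node → Set ℕ) : Prop where
  tree : GoodTree Γ
  empty_of_not_succ : ∀ σ ∈ Γ, ¬ IsSucc σ.len → a σ = ∅
  compl_dagger : ∀ σ ∈ Γ, IsSucc σ.len → a σ.dagger = (a σ)ᶜ
  branch_coherent : ∀ x : Node, x.len ≤ omega1 →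
    CoherentOn (branchDomain Γ x) (branchSeq a x)
  branch_proper : ∀ x : Node, x.len ≤ omega1 →
    ProperOn (branchDomain Γ x) (branchSeq a x)

/-- The Boolean subalgebra of `P(ℕ)` generated by a family `G`. -/
inductive GenBool (G : Set (Set ℕ)) : Set ℕ → Prop
  | basic (s : Set ℕ) : s ∈ G → GenBool G s
  | empty : GenBool G ∅
  | compl (s : Set ℕ) : GenBool G s → GenBool G sᶜ
  | inter (s t : Set ℕ) : GenBool G s → GenBool G t → GenBool G (s ∩ t)

/-- `B_Γ`: the Boolean subalgebra of `P(ℕ)` generated by `{a_σ : σ ∈ Γ}`. -/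
def BGamma (Γ : Set Node) (a : Node → Set ℕ) : Set (Set ℕ) :=
  { b | GenBool { s | ∃ σ ∈ Γ, s = a σ } b }

/-- A finite intersection from the family `{ℕ ∖ a_{x↾(α+1)} : α + 1 ≤ λ_x}`. -/
def finInterCompl (a : Node → Set ℕ) (x : Node) (F : Finset Ordinal) : Set ℕ :=
  ⋂ α ∈ F, (a (x.restrict (α + 1)))ᶜ

/-- The ultrafilter `U_x` on `B_Γ` generated by the finite intersections of
`{ℕ ∖ a_{x↾(α+1)} : α + 1 ≤ λ_x}`. -/
def Ux (Γ : Set Node) (a : Node → Set ℕ) (x : Node) : Set (Set ℕ) :=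
  { b | b ∈ BGamma Γ a ∧
    ∃ F : Finset Ordinal, (∀ α ∈ F, α + 1 ≤ x.len) ∧ finInterCompl a x F ⊆ b }

/-- The Stone topology on `X(Γ)`, with subbasic open sets `{z : b ∈ U_z}`, `b ∈ B_Γ`. -/
def stoneTop (Γ : Set Node) (a : Node → Set ℕ) :
    TopologicalSpace {z : Node // z ∈ XGamma Γ} :=
  TopologicalSpace.generateFrom
    { s | ∃ b ∈ BGamma Γ a, s = { z : {z : Node // z ∈ XGamma Γ} | b ∈ Ux Γ a z.1 } }

/-- An ultrafilter on a Boolean subalgebra `B` of `P(ℕ)`. -/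
def IsUltrafilterOn (B U : Set (Set ℕ)) : Prop :=
  U ⊆ B ∧
  (∀ s ∈ U, ∀ t ∈ U, s ∩ t ∈ U) ∧
  (∀ s ∈ U, ∀ t ∈ B, s ⊆ t → t ∈ U) ∧
  ∅ ∉ U ∧
  (∀ b ∈ B, Xor' (b ∈ U) (bᶜ ∈ U))

/-- The length-lexicographic (strict) order on finite binary strings. -/
def LenLexLT (σ τ : Node) : Prop :=
  σ.len < τ.len ∨ (σ.len = τ.len ∧ ∃ i < σ.len, σ.val i = false ∧ τ.val i = true ∧
    ∀ j < i, σ.val j = τ.val j)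

/-- `e` is the standard length-lexicographic enumeration of `2^{<ω}`. -/
def IsStdEnum (e : ℕ → Node) : Prop :=
  (∀ k, (e k).len < Ordinal.omega0) ∧
  (∀ σ : Node, σ.len < Ordinal.omega0 → ∃ k, e k = σ) ∧
  (∀ k l : ℕ, k < l → LenLexLT (e k) (e l))

/-- `⋃_{k<n} c^x_k` where `c^x_n = a^x_{e(n)} ∖ ⋃_{k<n} c^x_k` (recursively). -/
def cUnion (a : Node → Set ℕ) (x : Node) (eb : ℕ → Ordinal) : ℕ → Set ℕ
  | 0 => ∅
  | n + 1 => cUnion a x eb n ∪ (a (x.restrict (eb n + 1)) \ cUnion a x eb n)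

/-- `c^x_n = a^x_{e(n)} ∖ ⋃_{k<n} c^x_k`. -/
def cSeq (a : Node → Set ℕ) (x : Node) (eb : ℕ → Ordinal) (n : ℕ) : Set ℕ :=
  a (x.restrict (eb n + 1)) \ cUnion a x eb n

/-- `{x ⌢ σ : σ ∈ 2^{<ω}}`. -/
def appendSet (x : Node) : Set Node :=
  { τ | ∃ σ : Node, σ.len < Ordinal.omega0 ∧ τ = x.append σ }

/-- The defining equations of the extension `A_Γ[π,x]`:
`a_x = ∅`, `a_{x⌢(σ⌢0)} = ⋃{c^x_k : σ⌢1 ⊆ σ_{π(k)}}`, `a_{x⌢(σ⌢1)} = ℕ ∖ a_{x⌢(σ⌢0)}`. -/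
def ExtEquations (e : ℕ → Node) (π : ℕ → ℕ) (a : Node → Set ℕ) (x : Node)
    (eb : ℕ → Ordinal) (a' : Node → Set ℕ) : Prop :=
  a' x = ∅ ∧
  ∀ σ : Node, σ.len < Ordinal.omega0 →
    (a' (x.append (σ.snoc false)) =
      ⋃ k ∈ { k : ℕ | (e (π k)).Extends (σ.snoc true) }, cSeq a x eb k) ∧
    (a' (x.append (σ.snoc true)) = (a' (x.append (σ.snoc false)))ᶜ)

/-- The full tree `2^{<ω₁}`. -/
def GammaFull : Set Node := { σ | σ.len < omega1 }

theorem natLtOmega1 (n : ℕ) : (n : Ordinal) < omega1 := by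
  have h1 : (n : Ordinal) < Ordinal.omega0 := Ordinal.nat_lt_omega0 n
  have h2 : Ordinal.omega0 < omega1 := by
    rw [omega1, ← Cardinal.ord_aleph0]
    exact Cardinal.ord_lt_ord.2 (by rw [← Cardinal.aleph_zero]
                                    exact Cardinal.aleph_lt_aleph.2 zero_lt_one)
  exact h1.trans h2


lemma Node.ext' {σ τ : Node} (h1 : σ.len = τ.len) (h2 : σ.val = τ.val) : σ = τ := by
  cases σ; cases τ; simp_all

lemma lt_add_one_self (β : Ordinal) : β < β + 1 := by
  rw [Ordinal.add_one_eq_succ]; exact Order.lt_succ β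

lemma restrict_succ (x : Node) (β : Ordinal) :
    x.restrict (β + 1) = (x.restrict β).snoc (x.val β) := by
  apply Node.ext'
  · rfl
  · funext α
    show (if α < β + 1 then x.val α else false)
        = if α = (x.restrict β).len then x.val β
          else (if α < β then x.val α else false)
    have hlen : (x.restrict β).len = β := rfl
    rw [hlen]
    rcases lt_trichotomy α β with h | h | h
    · rw [if_pos (h.trans (lt_add_one_self β)), if_neg h.ne, if_pos h]
    · subst h; rw [if_pos (lt_add_one_self α), if_pos rfl]
    · rw [if_neg (by rw [Ordinal.add_one_eq_succ, Order.lt_succ_iff]; exact not_le.2 h),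
        if_neg h.ne', if_neg (asymm h)]

lemma extends_snoc_iff (τ x : Node) (m : Ordinal) :
    τ.Extends ((x.restrict m).snoc true) ↔
      (m + 1 ≤ τ.len ∧ (∀ α < m, τ.val α = x.val α) ∧ τ.val m = true) := by
  have hlen : ((x.restrict m).snoc true).len = m + 1 := rfl
  have hval : ∀ α, ((x.restrict m).snoc true).val α
      = if α = m then true else (if α < m then x.val α else false) := fun _ => rfl
  constructor
  · rintro ⟨h1, h2⟩
    rw [hlen] at h1
    refine ⟨h1, ?_, ?_⟩
    · intro α hα
      have := h2 α (by rw [hlen]; exact hα.trans (lt_add_one_self m))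
      rw [hval, if_neg hα.ne, if_pos hα] at this
      exact this
    · have := h2 m (by rw [hlen]; exact lt_add_one_self m)
      rw [hval, if_pos rfl] at this
      exact this
  · rintro ⟨h1, h2, h3⟩
    refine ⟨by rw [hlen]; exact h1, ?_⟩
    intro α hα
    rw [hlen, Ordinal.add_one_eq_succ, Order.lt_succ_iff] at hα
    rw [hval]
    rcases eq_or_lt_of_le hα with rfl | hα'
    · rw [if_pos rfl]; exact h3
    · rw [if_neg hα'.ne, if_pos hα']; exact h2 α hα'

/-- Proposition: from the standard length-lexicographic enumeration `⟨σ_k⟩` of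
`2^{<ω}`, a permutation `π` of `ℕ` and `L ⊆ ℕ` such that `[σ] ∩ {σ_k : k ∈ π[L]} ≠ ∅`
for all `σ`, the family with `a_∅ = ∅`, `a_{σ⌢0} = {k ∈ π[L] : σ⌢1 ⊆ σ_k}` and
`a_{σ⌢1} = ℕ ∖ a_{σ⌢0}` is a `𝕋`-algebra on `2^{<ω}`: every branch sequence is a
proper coherent sequence. -/
theorem stmt12 (e : ℕ → Node) (he : IsStdEnum e)
    (π : ℕ → ℕ) (hπ : Function.Bijective π) (L : Set ℕ)
    (hL : ∀ σ : Node, σ.len < Ordinal.omega0 → ∃ j ∈ π '' L, (e j).Extends σ)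
    (a : Node → Set ℕ)
    (ha0 : ∀ σ : Node, ¬ IsSucc σ.len → a σ = ∅)
    (ha1 : ∀ σ : Node, σ.len < Ordinal.omega0 →
      a (σ.snoc false) = { k : ℕ | k ∈ π '' L ∧ (e k).Extends (σ.snoc true) })
    (ha2 : ∀ σ : Node, σ.len < Ordinal.omega0 →
      a (σ.snoc true) = { k : ℕ | k ∈ π '' L ∧ (e k).Extends (σ.snoc true) }ᶜ) :
    ∀ x : Node, x.len ≤ Ordinal.omega0 →
      CoherentOn { α : Ordinal | α + 1 ≤ x.len } (branchSeq a x) ∧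
      ProperOn { α : Ordinal | α + 1 ≤ x.len } (branchSeq a x) := by
  intro x hx
  set b : ℕ → Set ℕ :=
    fun m => { k : ℕ | k ∈ π '' L ∧ (e k).Extends ((x.restrict (m : Ordinal)).snoc true) }
    with hbdef
  have hA : ∀ m : ℕ, branchSeq a x (m : Ordinal)
      = if x.val (m : Ordinal) then (b m)ᶜ else b m := by
    intro m
    have hrl : (x.restrict (m : Ordinal)).len = (m : Ordinal) := rfl
    have hrω : (x.restrict (m : Ordinal)).len < Ordinal.omega0 := by
      rw [hrl]; exact Ordinal.nat_lt_omega0 m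
    show a (x.restrict ((m : Ordinal) + 1)) = _
    rw [restrict_succ]
    cases hv : x.val (m : Ordinal)
    · rw [if_neg (by simp)]
      exact ha1 _ hrω
    · rw [if_pos rfl]
      exact ha2 _ hrω
  have hmem : ∀ (m k : ℕ), k ∈ b m ↔
      (k ∈ π '' L ∧ ((m : Ordinal) + 1 ≤ (e k).len ∧
        (∀ α < (m : Ordinal), (e k).val α = x.val α) ∧ (e k).val (m : Ordinal) = true)) := by
    intro m k
    rw [hbdef]
    exact and_congr_right fun _ => extends_snoc_iff _ _ _
  -- monotonicity / disjointness
  have hsub : ∀ m n : ℕ, m < n → x.val (m : Ordinal) = true → b n ⊆ b m := by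
    intro m n hmn hv k hk
    rw [hmem] at hk ⊢
    obtain ⟨hkL, hlen, hvals, hvaln⟩ := hk
    have hmo : (m : Ordinal) < (n : Ordinal) := by exact_mod_cast hmn
    refine ⟨hkL, ?_, fun α hα => hvals α (hα.trans hmo), by rw [hvals _ hmo]; exact hv⟩
    calc (m : Ordinal) + 1 ≤ (n : Ordinal) := by
            rw [Ordinal.add_one_eq_succ, Order.succ_le_iff]; exact hmo
      _ ≤ (n : Ordinal) + 1 := (lt_add_one_self _).le
      _ ≤ (e k).len := hlen
  have hdisj : ∀ m n : ℕ, m < n → x.val (m : Ordinal) = false → ∀ k, k ∈ b n → k ∉ b m := by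
    intro m n hmn hv k hk hk'
    rw [hmem] at hk hk'
    have hmo : (m : Ordinal) < (n : Ordinal) := by exact_mod_cast hmn
    have := hk.2.2.1 _ hmo
    rw [hv] at this
    rw [hk'.2.2.2] at this
    exact Bool.false_ne_true this.symm
  constructor
  · -- coherence
    intro α β hab hβ
    have hβω : β < Ordinal.omega0 := lt_of_lt_of_le (lt_of_lt_of_le (lt_add_one_self β) hβ) hx
    obtain ⟨n, rfl⟩ := Ordinal.lt_omega0.1 hβω
    obtain ⟨m, rfl⟩ := Ordinal.lt_omega0.1 (lt_of_le_of_lt hab hβω)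
    have hmn : m ≤ n := by exact_mod_cast hab
    refine ⟨∅, by simp, ?_⟩
    have hU : unionFin (branchSeq a x) ∅ = ∅ := by simp [unionFin]
    rw [hU, hA m, hA n]
    rcases eq_or_lt_of_le hmn with rfl | hlt
    · exact Or.inr subset_union_left
    · cases hvm : x.val (m : Ordinal) <;> cases hvn : x.val (n : Ordinal) <;>
        simp only [if_pos, if_neg, Bool.false_eq_true, ite_true, ite_false]
      · exact Or.inl fun k hk => absurd hk.1 (hdisj m n hlt hvm k hk.2)
      · refine Or.inr fun k hk => Or.inl fun hk' => hdisj m n hlt hvm k hk' hk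
      · exact Or.inl fun k hk => absurd (hsub m n hlt hvm hk.2) hk.1
      · exact Or.inr fun k hk => Or.inl fun hk' => hk (hsub m n hlt hvm hk')
  · -- properness
    intro β hβ F hF hcon
    have hβω : β < Ordinal.omega0 := lt_of_lt_of_le (lt_of_lt_of_le (lt_add_one_self β) hβ) hx
    obtain ⟨n, rfl⟩ := Ordinal.lt_omega0.1 hβω
    have hτlen : ((x.restrict (n : Ordinal)).snoc (!(x.val (n : Ordinal)))).len
        < Ordinal.omega0 := by
      show (n : Ordinal) + 1 < Ordinal.omega0
      exact_mod_cast Ordinal.nat_lt_omega0 (n + 1)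
    obtain ⟨j, hjL, hjext⟩ := hL _ hτlen
    obtain ⟨hjlen, hjval⟩ := hjext
    have hjlen' : (n : Ordinal) + 1 ≤ (e j).len := hjlen
    have hval : ∀ α < (n : Ordinal), (e j).val α = x.val α := by
      intro α hα
      have := hjval α (show α < (n : Ordinal) + 1 from hα.trans (lt_add_one_self _))
      rw [show ((x.restrict (n : Ordinal)).snoc (!(x.val (n : Ordinal)))).val α
          = if α = (n : Ordinal) then (!(x.val (n : Ordinal)))
            else (if α < (n : Ordinal) then x.val α else false) from rfl,
        if_neg hα.ne, if_pos hα] at this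
      exact this
    have hvaln : (e j).val (n : Ordinal) = !(x.val (n : Ordinal)) := by
      have := hjval (n : Ordinal) (lt_add_one_self _)
      rw [show ((x.restrict (n : Ordinal)).snoc (!(x.val (n : Ordinal)))).val (n : Ordinal)
          = if (n : Ordinal) = (n : Ordinal) then (!(x.val (n : Ordinal)))
            else (if (n : Ordinal) < (n : Ordinal) then x.val (n : Ordinal) else false) from rfl,
        if_pos rfl] at this
      exact this
    have hjin : j ∈ branchSeq a x (n : Ordinal) := by
      rw [hA n]
      cases hvn : x.val (n : Ordinal)
      · rw [if_neg (by simp)]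
        rw [hmem]
        exact ⟨hjL, hjlen', hval, by rw [hvaln, hvn]; rfl⟩
      · rw [if_pos rfl]
        intro hj
        rw [hmem] at hj
        have := hj.2.2.2
        rw [hvaln, hvn] at this
        exact Bool.false_ne_true this
    have hjout : j ∉ unionFin (branchSeq a x) F := by
      intro hj
      simp only [unionFin, mem_iUnion, exists_prop] at hj
      obtain ⟨γ, hγF, hjγ⟩ := hj
      have hγn : γ < (n : Ordinal) := hF γ hγF
      obtain ⟨m, rfl⟩ := Ordinal.lt_omega0.1 (hγn.trans (Ordinal.nat_lt_omega0 n))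
      have hmn : m < n := by exact_mod_cast hγn
      rw [hA m] at hjγ
      cases hvm : x.val (m : Ordinal)
      · rw [if_neg (by simp [hvm])] at hjγ
        rw [hmem] at hjγ
        have := hjγ.2.2.2
        rw [hval _ hγn, hvm] at this
        exact Bool.false_ne_true this
      · rw [if_pos (by rw [hvm])] at hjγ
        apply hjγ
        rw [hmem]
        refine ⟨hjL, ?_, fun α hα => hval α (hα.trans hγn), by rw [hval _ hγn]; exact hvm⟩
        calc (m : Ordinal) + 1 ≤ (n : Ordinal) := by
              rw [Ordinal.add_one_eq_succ, Order.succ_le_iff]; exact hγn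
          _ ≤ (n : Ordinal) + 1 := (lt_add_one_self _).le
          _ ≤ (e j).len := hjlen'
    exact hjout (hcon hjin)

end
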